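/- Let {a_k}_{k∈ℤ} be real coefficients with a_k = 0 for k < 0 and |a_k| ≤ Ξ (k+1)^{−β} for all k ≥ 0, where Ξ > 0 and β > 2.5. For integers j ≥ 0, G ≥ 1 and k ∈ ℤ define the block coefficient E_{j,k} = Σ_{t = jG+1}^{(j+1)G} a_{t−k}. Then there exists a constant C > 0, depending only on Ξ and β, such that for all j ≥ 0 and G ≥ 1, Σ_{k ≤ (j+1)G} E_{j,k}² ≤ C G. -/

import Mathlib

lemma bcssb_summable_aux (p : ℝ) (hp : 1 < p) :
    Summable (fun n : ℕ => ((n : ℝ) + 1) ^ (-p)) := by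
  have h := Real.summable_nat_rpow_inv.mpr hp
  have h2 := (summable_nat_add_iff 1).mpr h
  refine h2.congr fun n => ?_
  rw [← Real.rpow_neg (by positivity)]
  push_cast
  ring_nf

lemma bcssb_rpow_anti {x y c : ℝ} (hx : 0 < x) (hxy : x ≤ y) (hc : 0 ≤ c) :
    y ^ (-c) ≤ x ^ (-c) := by
  rw [Real.rpow_neg (by linarith), Real.rpow_neg hx.le]
  exact inv_anti₀ (Real.rpow_pos_of_pos hx c) (Real.rpow_le_rpow hx.le hxy hc)

lemma bcssb_sum_Icc_int {M : Type*} [AddCommMonoid M] (f : ℤ → M) (lo : ℤ) (N : ℕ) :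
    ∑ t ∈ Finset.Icc lo (lo + N - 1), f t = ∑ i ∈ Finset.range N, f (lo + i) := by
  induction N with
  | zero => rw [Finset.range_zero, Finset.sum_empty, Finset.Icc_eq_empty (by omega),
      Finset.sum_empty]
  | succ n ih =>
    have hins : Finset.Icc lo (lo + (n + 1 : ℕ) - 1)
        = insert (lo + n) (Finset.Icc lo (lo + n - 1)) := by
      ext x
      simp only [Finset.mem_Icc, Finset.mem_insert]
      omega
    rw [hins, Finset.sum_insert (by simp only [Finset.mem_Icc]; omega), ih,
      Finset.sum_range_succ]
    exact add_comm _ _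

lemma bcssb_sum_clamp_le (g : ℕ → ℝ) (hg : ∀ p, 0 ≤ g p) (hs : Summable g) (T : Finset ℤ) :
    ∑ m ∈ T, (if 0 ≤ m then g m.toNat else 0) ≤ ∑' p, g p := by
  rw [Finset.sum_ite, Finset.sum_const_zero, add_zero]
  have himg : ∑ m ∈ T.filter (fun m => 0 ≤ m), g m.toNat
      = ∑ p ∈ (T.filter (fun m => 0 ≤ m)).image Int.toNat, g p := by
    rw [Finset.sum_image]
    intro x hx y hy hxy
    simp only [Finset.mem_coe, Finset.mem_filter] at hx hy
    omega
  rw [himg]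
  exact Summable.sum_le_tsum _ (fun p _ => hg p) hs

theorem block_coefficient_sq_sum_bound (Ξ β : ℝ) (hΞ : 0 < Ξ) (hβ : 2.5 < β) :
    ∃ C > 0, ∀ a : ℤ → ℝ,
      (∀ k : ℤ, k < 0 → a k = 0) →
      (∀ k : ℤ, 0 ≤ k → |a k| ≤ Ξ * ((k : ℝ) + 1) ^ (-β)) →
      ∀ j G : ℤ, 0 ≤ j → 1 ≤ G →
        Summable (fun k : {k : ℤ // k ≤ (j + 1) * G} =>
          (∑ t ∈ Finset.Icc (j * G + 1) ((j + 1) * G), a (t - (k : ℤ))) ^ 2) ∧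
        ∑' k : {k : ℤ // k ≤ (j + 1) * G},
            (∑ t ∈ Finset.Icc (j * G + 1) ((j + 1) * G), a (t - (k : ℤ))) ^ 2
          ≤ C * (G : ℝ) := by
  have hβ1 : (1:ℝ) < β := by norm_num at hβ ⊢; linarith
  have hsumβ : Summable (fun p : ℕ => ((p:ℝ)+1) ^ (-β)) := bcssb_summable_aux β hβ1
  have hsum2 : Summable (fun p : ℕ => ((p:ℝ)+1) ^ (-(2:ℝ))) :=
    bcssb_summable_aux 2 one_lt_two
  have hsumT : Summable (fun p : ℕ => ((p:ℝ)+1) ^ (-(2*β-4))) :=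
    bcssb_summable_aux (2*β-4) (by norm_num at hβ ⊢; linarith)
  set Sβ : ℝ := ∑' p : ℕ, ((p:ℝ)+1) ^ (-β) with hSβ
  set K : ℝ := ∑' p : ℕ, ((p:ℝ)+1) ^ (-(2:ℝ)) with hK
  set T2 : ℝ := ∑' p : ℕ, ((p:ℝ)+1) ^ (-(2*β-4)) with hT2
  have hSβpos : 0 < Sβ :=
    Summable.tsum_pos hsumβ (fun p => Real.rpow_nonneg (by positivity) _) 0
      (Real.rpow_pos_of_pos (by norm_num) _)
  have hKnn : 0 ≤ K := tsum_nonneg fun p => Real.rpow_nonneg (by positivity) _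
  have hT2nn : 0 ≤ T2 := tsum_nonneg fun p => Real.rpow_nonneg (by positivity) _
  refine ⟨(Ξ*Sβ)^2 + (Ξ*K)^2 * T2, by positivity, ?_⟩
  intro a ha0 hbd j G hj hG
  lift G to ℕ using by linarith
  lift j to ℕ using hj
  have hG1 : 1 ≤ G := by exact_mod_cast hG
  -- the clamped dominating coefficients
  set c : ℤ → ℝ := fun m => if 0 ≤ m then Ξ * ((m.toNat:ℝ)+1) ^ (-β) else 0 with hc
  have habs : ∀ m : ℤ, |a m| ≤ c m := by
    intro m
    by_cases hm : 0 ≤ m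
    · have := hbd m hm
      rw [hc]
      simp only [hm, if_true]
      have hcast : ((m.toNat : ℕ) : ℝ) = (m : ℝ) := by exact_mod_cast Int.toNat_of_nonneg hm
      rw [hcast]
      exact this
    · rw [ha0 m (by omega), hc]
      simp [hm]
  -- bound on sums of c over integer windows : always
  have hA : ∀ s : ℤ, ∑ i ∈ Finset.range G, c ((i:ℤ) + s) ≤ Ξ * Sβ := by
    intro s
    have hrw : ∑ i ∈ Finset.range G, c ((i:ℤ) + s)
        = ∑ m ∈ (Finset.range G).image (fun i : ℕ => (i:ℤ) + s), c m := by
      rw [Finset.sum_image]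
      intro x _ y _ h
      have h' : (x:ℤ) + s = (y:ℤ) + s := h
      omega
    rw [hrw]
    have := bcssb_sum_clamp_le (fun p => Ξ * ((p:ℝ)+1) ^ (-β))
      (fun p => by positivity) (hsumβ.mul_left Ξ)
      ((Finset.range G).image (fun i : ℕ => (i:ℤ) + s))
    rw [tsum_mul_left] at this
    exact this
  -- bound for far windows
  have hB : ∀ s : ℤ, 1 ≤ s →
      ∑ i ∈ Finset.range G, c ((i:ℤ) + s) ≤ Ξ * ((s:ℝ)+1) ^ (-(β-2)) * K := by
    intro s hs
    have hfac : (0:ℝ) ≤ Ξ * ((s:ℝ)+1) ^ (-(β-2)) := by positivity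
    have hstep : ∀ i : ℕ, c ((i:ℤ) + s) ≤ Ξ * ((s:ℝ)+1) ^ (-(β-2)) *
        (if 0 ≤ (i:ℤ)+s then ((((i:ℤ)+s).toNat:ℝ)+1) ^ (-(2:ℝ)) else 0) := by
      intro i
      have hm : (0:ℤ) ≤ (i:ℤ) + s := by omega
      rw [hc]
      simp only [hm, if_true]
      set M : ℝ := ((((i:ℤ)+s).toNat : ℕ) : ℝ) with hM
      have hMval : M = (i:ℝ) + (s:ℝ) := by
        rw [hM]
        exact_mod_cast congrArg (fun z : ℤ => (z:ℝ)) (Int.toNat_of_nonneg hm)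
      have hspos : (1:ℝ) ≤ (s:ℝ) := by exact_mod_cast hs
      have hMs : (s:ℝ) + 1 ≤ M + 1 := by
        rw [hMval]
        have : (0:ℝ) ≤ (i:ℝ) := Nat.cast_nonneg i
        linarith
      have hsplit : (M+1) ^ (-β) = (M+1) ^ (-(β-2)) * (M+1) ^ (-(2:ℝ)) := by
        rw [← Real.rpow_add (by linarith)]
        ring_nf
      rw [hsplit]
      have h1 : (M+1) ^ (-(β-2)) ≤ ((s:ℝ)+1) ^ (-(β-2)) :=
        bcssb_rpow_anti (by linarith) hMs (by norm_num at hβ ⊢; linarith)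
      have h2 : (0:ℝ) ≤ (M+1) ^ (-(2:ℝ)) := Real.rpow_nonneg (by linarith) _
      calc Ξ * ((M+1) ^ (-(β-2)) * (M+1) ^ (-(2:ℝ)))
          ≤ Ξ * (((s:ℝ)+1) ^ (-(β-2)) * (M+1) ^ (-(2:ℝ))) := by
            apply mul_le_mul_of_nonneg_left _ hΞ.le
            exact mul_le_mul_of_nonneg_right h1 h2
        _ = Ξ * ((s:ℝ)+1) ^ (-(β-2)) * (M+1) ^ (-(2:ℝ)) := by ring
    calc ∑ i ∈ Finset.range G, c ((i:ℤ) + s)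
        ≤ ∑ i ∈ Finset.range G, (Ξ * ((s:ℝ)+1) ^ (-(β-2)) *
            (if 0 ≤ (i:ℤ)+s then ((((i:ℤ)+s).toNat:ℝ)+1) ^ (-(2:ℝ)) else 0)) :=
          Finset.sum_le_sum fun i _ => hstep i
      _ = Ξ * ((s:ℝ)+1) ^ (-(β-2)) * ∑ i ∈ Finset.range G,
            (if 0 ≤ (i:ℤ)+s then ((((i:ℤ)+s).toNat:ℝ)+1) ^ (-(2:ℝ)) else 0) := by
          rw [Finset.mul_sum]
      _ ≤ Ξ * ((s:ℝ)+1) ^ (-(β-2)) * K := by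
          apply mul_le_mul_of_nonneg_left _ hfac
          have hrw : ∑ i ∈ Finset.range G,
              (if 0 ≤ (i:ℤ)+s then ((((i:ℤ)+s).toNat:ℝ)+1) ^ (-(2:ℝ)) else 0)
              = ∑ m ∈ (Finset.range G).image (fun i : ℕ => (i:ℤ) + s),
                (if 0 ≤ m then ((m.toNat:ℝ)+1) ^ (-(2:ℝ)) else 0) := by
            rw [Finset.sum_image]
            intro x _ y _ h
            have h' : (x:ℤ) + s = (y:ℤ) + s := h
            omega
          rw [hrw]
          exact bcssb_sum_clamp_le _ (fun p => Real.rpow_nonneg (by positivity) _) hsum2 _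
  -- the reindexed squared block sums and their dominating sequence
  set F : ℕ → ℝ := fun n => (∑ i ∈ Finset.range G, a ((i:ℤ) + ((n:ℤ) + 1 - G))) ^ 2 with hF
  set Gb : ℕ → ℝ := fun n =>
    if n < G then (Ξ*Sβ)^2 else (Ξ*K)^2 * (((n-G:ℕ):ℝ)+2) ^ (-(2*β-4)) with hGb
  have hFle : ∀ n, F n ≤ Gb n := by
    intro n
    have habs_sum : |∑ i ∈ Finset.range G, a ((i:ℤ) + ((n:ℤ) + 1 - G))|
        ≤ ∑ i ∈ Finset.range G, c ((i:ℤ) + ((n:ℤ) + 1 - G)) :=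
      le_trans (Finset.abs_sum_le_sum_abs _ _) (Finset.sum_le_sum fun i _ => habs _)
    by_cases hn : n < G
    · have h2 : |∑ i ∈ Finset.range G, a ((i:ℤ) + ((n:ℤ) + 1 - G))| ≤ Ξ * Sβ :=
        le_trans habs_sum (hA _)
      rw [hF, hGb]
      simp only [hn, if_true]
      calc (∑ i ∈ Finset.range G, a ((i:ℤ) + ((n:ℤ) + 1 - G))) ^ 2
          = |∑ i ∈ Finset.range G, a ((i:ℤ) + ((n:ℤ) + 1 - G))| ^ 2 := (sq_abs _).symm
        _ ≤ (Ξ*Sβ)^2 := pow_le_pow_left₀ (abs_nonneg _) h2 2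
    · have hsge : (1:ℤ) ≤ (n:ℤ) + 1 - G := by omega
      have h2 : |∑ i ∈ Finset.range G, a ((i:ℤ) + ((n:ℤ) + 1 - G))|
          ≤ Ξ * ((((n:ℤ) + 1 - G : ℤ):ℝ)+1) ^ (-(β-2)) * K :=
        le_trans habs_sum (hB _ hsge)
      rw [hF, hGb]
      simp only [hn, if_false]
      have hGn : G ≤ n := by omega
      set x : ℝ := ((n-G:ℕ):ℝ) + 2 with hx
      have hxval : (((n:ℤ) + 1 - G : ℤ):ℝ) + 1 = x := by
        rw [hx]
        push_cast [hGn]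
        ring
      have hxpos : (0:ℝ) < x := by positivity
      have hpow : (x ^ (-(β-2))) ^ (2:ℕ) = x ^ (-(2*β-4)) := by
        rw [← Real.rpow_natCast (x ^ (-(β-2))) 2, ← Real.rpow_mul hxpos.le]
        congr 1
        push_cast
        ring
      rw [hxval] at h2
      calc (∑ i ∈ Finset.range G, a ((i:ℤ) + ((n:ℤ) + 1 - G))) ^ 2
          = |∑ i ∈ Finset.range G, a ((i:ℤ) + ((n:ℤ) + 1 - G))| ^ 2 := (sq_abs _).symm
        _ ≤ (Ξ * x ^ (-(β-2)) * K) ^ 2 := pow_le_pow_left₀ (abs_nonneg _) h2 2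
        _ = (Ξ*K)^2 * (x ^ (-(β-2))) ^ (2:ℕ) := by ring
        _ = (Ξ*K)^2 * x ^ (-(2*β-4)) := by rw [hpow]
  have hGbshift : (fun p : ℕ => Gb (p + G)) = fun p : ℕ => (Ξ*K)^2 * ((p:ℝ)+2) ^ (-(2*β-4)) := by
    funext p
    rw [hGb]
    simp only [Nat.add_sub_cancel]
    rw [if_neg (by omega)]
  have hshift2 : ∀ p : ℕ, (((p+1:ℕ):ℝ)+1) ^ (-(2*β-4)) = ((p:ℝ)+2) ^ (-(2*β-4)) := by
    intro p
    congr 1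
    push_cast
    ring
  have hs2 : Summable (fun p : ℕ => ((p:ℝ)+2) ^ (-(2*β-4))) :=
    ((summable_nat_add_iff 1).mpr hsumT).congr hshift2
  have hGbsum : Summable Gb := by
    refine (summable_nat_add_iff G).mp ?_
    rw [hGbshift]
    exact hs2.mul_left _
  have htGb : ∑' n, Gb n ≤ ((Ξ*Sβ)^2 + (Ξ*K)^2 * T2) * G := by
    rw [← Summable.sum_add_tsum_nat_add G hGbsum]
    have h1 : ∑ i ∈ Finset.range G, Gb i = (G:ℝ) * (Ξ*Sβ)^2 := by
      have hcst : ∀ i ∈ Finset.range G, Gb i = (Ξ*Sβ)^2 := fun i hi => by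
        rw [hGb]; exact if_pos (Finset.mem_range.mp hi)
      rw [Finset.sum_congr rfl hcst, Finset.sum_const, Finset.card_range, nsmul_eq_mul]
    have h2 : ∑' p : ℕ, Gb (p + G) ≤ (Ξ*K)^2 * T2 := by
      rw [hGbshift, tsum_mul_left]
      apply mul_le_mul_of_nonneg_left _ (by positivity)
      have he : ∑' p : ℕ, ((p:ℝ)+2) ^ (-(2*β-4))
          = ∑' p : ℕ, (((p+1:ℕ):ℝ)+1) ^ (-(2*β-4)) := (tsum_congr hshift2).symm
      rw [he]
      have hz := Summable.tsum_eq_zero_add hsumT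
      have hnn : (0:ℝ) ≤ (((0:ℕ):ℝ)+1) ^ (-(2*β-4)) := Real.rpow_nonneg (by norm_num) _
      rw [hT2]
      linarith [hz]
    have hGge : (1:ℝ) ≤ (G:ℝ) := by exact_mod_cast hG1
    nlinarith [sq_nonneg (Ξ*K), hT2nn, h2, mul_le_mul_of_nonneg_left hGge (mul_nonneg (sq_nonneg (Ξ*K)) hT2nn)]
  have hFsum : Summable F := Summable.of_nonneg_of_le (fun n => sq_nonneg _) hFle hGbsum
  have hFt : ∑' n, F n ≤ ((Ξ*Sβ)^2 + (Ξ*K)^2 * T2) * G :=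
    le_trans (Summable.tsum_le_tsum hFle hFsum hGbsum) htGb
  -- the equivalence between ℕ and the index set
  let e : ℕ ≃ {k : ℤ // k ≤ ((j:ℤ) + 1) * (G:ℤ)} :=
    { toFun := fun n => ⟨((j:ℤ)+1)*(G:ℤ) - n, sub_le_self _ (Int.natCast_nonneg n)⟩
      invFun := fun k => (((j:ℤ)+1)*(G:ℤ) - k.1).toNat
      left_inv := fun n => by
        simp only []
        rw [show ((j:ℤ)+1)*(G:ℤ) - (((j:ℤ)+1)*(G:ℤ) - n) = (n:ℤ) by ring, Int.toNat_natCast]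
      right_inv := fun k => Subtype.ext (by
        simp only []
        rw [Int.toNat_of_nonneg (sub_nonneg.mpr k.2)]
        ring) }
  have hfe : ∀ n : ℕ,
      (∑ t ∈ Finset.Icc ((j:ℤ)*(G:ℤ)+1) (((j:ℤ)+1)*(G:ℤ)), a (t - ((e n : ℤ)))) ^ 2 = F n := by
    intro n
    have hval : ((e n : ℤ)) = ((j:ℤ)+1)*(G:ℤ) - n := rfl
    have hend : ((j:ℤ)+1)*(G:ℤ) = ((j:ℤ)*(G:ℤ)+1) + (G:ℕ) - 1 := by push_cast; ring
    rw [hval, hend, bcssb_sum_Icc_int (fun t => a (t - (((j:ℤ)*(G:ℤ)+1) + (G:ℕ) - 1 - n))), hF]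
    congr 1
    refine Finset.sum_congr rfl fun i _ => ?_
    congr 1
    push_cast
    ring
  constructor
  · refine e.summable_iff.mp ?_
    exact hFsum.congr fun n => (hfe n).symm
  · have hcast : ((G:ℤ):ℝ) = ((G:ℕ):ℝ) := by push_cast; ring
    calc ∑' k : {k : ℤ // k ≤ ((j:ℤ) + 1) * (G:ℤ)},
          (∑ t ∈ Finset.Icc ((j:ℤ)*(G:ℤ)+1) (((j:ℤ)+1)*(G:ℤ)), a (t - (k : ℤ))) ^ 2
        = ∑' n : ℕ,
          (∑ t ∈ Finset.Icc ((j:ℤ)*(G:ℤ)+1) (((j:ℤ)+1)*(G:ℤ)), a (t - ((e n : ℤ)))) ^ 2 :=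
          (e.tsum_eq _).symm
      _ = ∑' n, F n := tsum_congr hfe
      _ ≤ ((Ξ*Sβ)^2 + (Ξ*K)^2 * T2) * G := hFt
      _ = ((Ξ*Sβ)^2 + (Ξ*K)^2 * T2) * ((G:ℤ):ℝ) := by rw [hcast]
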